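/- arXiv:2207.08300 — 2 statements merged into one kernel-verified Lean document; each statement's English description precedes it below -/
import Mathlib

section
/- The shuffle product distributes over the multiplicative mixed composition product from the left: for c, d ∈ ℝ⟨⟨X⟩⟩ and e ∈ ℝ^m⟨⟨X⟩⟩, one has (c ⧢ d) ∘̄ δ_e = (c ∘̄ δ_e) ⧢ (d ∘̄ δ_e), where ∘̄ denotes the multiplicative mixed composition product. -/
open scoped BigOperators

namespace FPS

/-- A (noncommutative) formal power series over alphabet `X` is a map from words to `ℝ`. -/
abbrev Series (X : Type*) := List X → ℝ

noncomputable section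

variable {X : Type*} [DecidableEq X]

/-- The series `1·∅`. -/
def one : Series X := fun η => if η = [] then 1 else 0

/-- Cauchy (concatenation) product. -/
def cauchy (c d : Series X) : Series X := fun η =>
  ∑ i ∈ Finset.range (η.length + 1), c (η.take i) * d (η.drop i)

/-- Shuffle product. -/
def sh (c d : Series X) : List X → ℝ
  | [] => c [] * d []
  | x :: t => sh (fun w => c (x :: w)) d t + sh c (fun w => d (x :: w)) t

/-- Cauchy powers. -/
def cpow (c : Series X) : ℕ → Series X
  | 0 => one
  | k + 1 => cauchy c (cpow c k)

/-- Shuffle powers. -/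
def shpow (c : Series X) : ℕ → Series X
  | 0 => one
  | k + 1 => sh c (shpow c k)

/-- The proper series `1 - s/(s,∅)` entering the inverse formulas (negated proper part of `s/(s,∅)`). -/
def sprime (s : Series X) : Series X := fun w => if w = [] then 0 else - (s w / s [])

/-- Cauchy inverse `(s,∅)⁻¹ Σ_k (s')^k` of a purely improper series. -/
def cInv (s : Series X) : Series X := fun η =>
  (s [])⁻¹ * ∑ k ∈ Finset.range (η.length + 1), cpow (sprime s) k η

/-- Shuffle inverse `(s,∅)⁻¹ Σ_k (s')^{⧢k}` of a purely improper series. -/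
def shInv (s : Series X) : Series X := fun η =>
  (s [])⁻¹ * ∑ k ∈ Finset.range (η.length + 1), shpow (sprime s) k η

/-- The order: minimal length of a word in the support (`⊤` for the zero series). -/
def ord (c : Series X) : ℕ∞ := sInf ((fun η : List X => (η.length : ℕ∞)) '' {η | c η ≠ 0})

/-- `σ^n` with `σ^⊤ = 0`. -/
def powE (σ : ℝ) : ℕ∞ → ℝ := fun n => if n = ⊤ then 0 else σ ^ n.toNat

/-- The ultrametric `κ(c,d) = σ^{ord(c-d)}`. -/
def kappa (σ : ℝ) (c d : Series X) : ℝ := powE σ (ord (c - d))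

/-- Order of a vector of series (minimum over components). -/
def ordV {n : ℕ} (c : Fin n → Series X) : ℕ∞ := ⨅ i, ord (c i)

/-- Ultrametric on vectors of series. -/
def kappaV (σ : ℝ) {n : ℕ} (c d : Fin n → Series X) : ℝ := powE σ (ordV (c - d))

/-- Proper part `c - (c,∅)∅`. -/
def properPart (c : Series X) : Series X := fun w => if w = [] then 0 else c w

/-- Left concatenation by a letter: `x·s`. -/
def leftc (x : X) (s : Series X) : Series X := fun η =>
  match η with
  | [] => 0
  | y :: t => if y = x then s t else 0

end

noncomputable section

/-- `φ̄_d(η)` : the algebra homomorphism defining the multiplicative mixed composition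
product, with `φ̄_d(x_0)(w) = x_0 w` and `φ̄_d(x_i)(w) = x_i (d_i ⧢ w)`. -/
def phiWord {m : ℕ} (d : Fin m → Series (Fin (m + 1))) :
    List (Fin (m + 1)) → Series (Fin (m + 1)) → Series (Fin (m + 1))
  | [], w => w
  | i :: t, w =>
      Fin.cases (leftc 0 (phiWord d t w)) (fun j => leftc j.succ (sh (d j) (phiWord d t w))) i

/-- Multiplicative mixed composition product `c ∘̄ δ_d = Σ_η (c,η) φ̄_d(η)(1)`. -/
def mix {m : ℕ} (c : Series (Fin (m + 1))) (d : Fin m → Series (Fin (m + 1))) :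
    Series (Fin (m + 1)) := fun η =>
  ∑ k ∈ Finset.range (η.length + 1),
    ∑ v : List.Vector (Fin (m + 1)) k, c v.toList * phiWord d v.toList one η

/-- `ψ_e(η)` : the algebra homomorphism defining the composition product, with
`ψ_e(x'_i)(w) = x_0 (e_i ⧢ w)`, `e_0 = 1∅`. -/
def psiWord {ℓ m : ℕ} (e : Fin ℓ → Series (Fin (m + 1))) :
    List (Fin (ℓ + 1)) → Series (Fin (m + 1)) → Series (Fin (m + 1))
  | [], w => w
  | i :: t, w => leftc 0 (sh (Fin.cases one e i) (psiWord e t w))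

/-- Composition product `c ∘ e = Σ_η (c,η) ψ_e(η)(1)`. -/
def comp {ℓ m : ℕ} (c : Series (Fin (ℓ + 1))) (e : Fin ℓ → Series (Fin (m + 1))) :
    Series (Fin (m + 1)) := fun η =>
  ∑ k ∈ Finset.range (η.length + 1),
    ∑ v : List.Vector (Fin (ℓ + 1)) k, c v.toList * psiWord e v.toList one η

/-- The multiplicative composition product on `δ`-series:
`δ_c ∘ δ_d = δ_{d ⧢ (c ∘̄ δ_d)}`, expressed on the underlying series. -/
def star {m : ℕ} (c d : Fin m → Series (Fin (m + 1))) : Fin m → Series (Fin (m + 1)) :=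
  fun i => sh (d i) (mix (c i) d)

/-- The all-ones series vector (generating series of the identity `δ_1`). -/
def oneV {X : Type*} [DecidableEq X] (m : ℕ) : Fin m → Series X := fun _ => one

open Classical in
/-- The inverse `d^{∘-1}` in the multiplicative dynamic output feedback group: the unique
solution of `e = d^{⧢-1} ∘̄ δ_e`. -/
def dynInv {m : ℕ} (d : Fin m → Series (Fin (m + 1))) : Fin m → Series (Fin (m + 1)) :=
  if h : ∃ e : Fin m → Series (Fin (m + 1)), e = fun i => mix (shInv (d i)) e then h.choose
  else oneV m

/-- Shuffle power of a family: `c^{⧢n} = c_1^{⧢n_1} ⧢ ⋯ ⧢ c_ℓ^{⧢n_ℓ}`. -/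
def shFam {X : Type*} [DecidableEq X] {ℓ : ℕ} (c : Fin ℓ → Series X) (n : Fin ℓ →₀ ℕ) :
    Series X :=
  (List.finRange ℓ).foldr (fun i acc => sh (shpow (c i) (n i)) acc) one

/-- Wiener-Fliess composition product `d ∘̂ c = Σ_{η∈X̃*} (d,η) c^{⧢η}` of a commutative
series `d` with a (proper) noncommutative series vector `c`. -/
def wf {X : Type*} [DecidableEq X] {ℓ : ℕ} (d : MvPowerSeries (Fin ℓ) ℝ)
    (c : Fin ℓ → Series X) : Series X := fun η =>
  ∑ n ∈ Finset.Iic (Finsupp.equivFunOnFinite.symm fun _ : Fin ℓ => η.length),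
    MvPowerSeries.coeff n d * shFam c n η

end

set_option linter.unusedSectionVars false
section Aux

variable {X : Type*} [DecidableEq X]

theorem sh_nil (a b : Series X) : sh a b [] = a [] * b [] := rfl

theorem sh_cons (a b : Series X) (x : X) (t : List X) :
    sh a b (x :: t) = sh (fun w => a (x :: w)) b t + sh a (fun w => b (x :: w)) t := rfl

theorem sh_zero_right : ∀ (η : List X) (a : Series X), sh a (fun _ => (0:ℝ)) η = 0 := by
  intro η
  induction η with
  | nil => intro a; simp [sh_nil]
  | cons x t ih => intro a; rw [sh_cons]; rw [ih, ih]; ring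

theorem sh_add_right : ∀ (η : List X) (a b b' : Series X),
    sh a (fun w => b w + b' w) η = sh a b η + sh a b' η := by
  intro η
  induction η with
  | nil => intro a b b'; simp only [sh_nil]; ring
  | cons x t ih => intro a b b'; rw [sh_cons, sh_cons, sh_cons]; rw [ih, ih]; ring

theorem sh_smul_right : ∀ (η : List X) (a b : Series X) (r : ℝ),
    sh a (fun w => r * b w) η = r * sh a b η := by
  intro η
  induction η with
  | nil => intro a b r; simp only [sh_nil]; ring
  | cons x t ih => intro a b r; rw [sh_cons, sh_cons]; rw [ih, ih]; ring

theorem sh_sum_right {ι : Type*} : ∀ (η : List X) (a : Series X) (s : Finset ι)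
    (f : ι → Series X),
    sh a (fun w => ∑ i ∈ s, f i w) η = ∑ i ∈ s, sh a (f i) η := by
  intro η
  induction η with
  | nil => intro a s f; simp only [sh_nil]; rw [Finset.mul_sum]
  | cons x t ih =>
      intro a s f
      rw [sh_cons]
      rw [ih (fun w => a (x :: w)) s f, ih a s (fun i w => f i (x :: w))]
      rw [← Finset.sum_add_distrib]
      exact Finset.sum_congr rfl fun i _ => by rw [sh_cons]

theorem sh_comm : ∀ (η : List X) (a b : Series X), sh a b η = sh b a η := by
  intro η
  induction η with
  | nil => intro a b; simp only [sh_nil]; ring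
  | cons x t ih => intro a b; rw [sh_cons, sh_cons, ih (fun w => a (x::w)) b, ih a (fun w => b (x::w))]; ring

theorem sh_add_left : ∀ (η : List X) (a a' b : Series X),
    sh (fun w => a w + a' w) b η = sh a b η + sh a' b η := by
  intro η a a' b
  rw [sh_comm, sh_add_right, sh_comm η b a, sh_comm η b a']

theorem sh_assoc : ∀ (η : List X) (a b c : Series X),
    sh (sh a b) c η = sh a (sh b c) η := by
  intro η
  induction η with
  | nil => intro a b c; simp only [sh_nil]; ring
  | cons x t ih =>
      intro a b c
      rw [sh_cons, sh_cons]
      have h1 : (fun w => sh a b (x :: w))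
          = fun w => sh (fun w' => a (x :: w')) b w + sh a (fun w' => b (x :: w')) w :=
        funext fun w => sh_cons a b x w
      have h2 : (fun w => sh b c (x :: w))
          = fun w => sh (fun w' => b (x :: w')) c w + sh b (fun w' => c (x :: w')) w :=
        funext fun w => sh_cons b c x w
      rw [h1, h2, sh_add_left, sh_add_right, ih, ih, ih]
      ring

theorem sh_congr : ∀ (η : List X) (a a' b b' : Series X),
    (∀ w : List X, w.length ≤ η.length → a w = a' w) →
    (∀ w : List X, w.length ≤ η.length → b w = b' w) →
    sh a b η = sh a' b' η := by
  intro η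
  induction η with
  | nil => intro a a' b b' ha hb; rw [sh_nil, sh_nil, ha [] (by simp), hb [] (by simp)]
  | cons x t ih =>
      intro a a' b b' ha hb
      rw [sh_cons, sh_cons]
      rw [ih (fun w => a (x::w)) (fun w => a' (x::w)) b b'
            (fun w hw => ha (x::w) (by simpa using Nat.succ_le_succ hw))
            (fun w hw => hb w (le_trans hw (Nat.le_succ _))),
          ih a a' (fun w => b (x::w)) (fun w => b' (x::w))
            (fun w hw => ha w (le_trans hw (Nat.le_succ _)))
            (fun w hw => hb (x::w) (by simpa using Nat.succ_le_succ hw))]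

theorem sh_vanish : ∀ (η : List X) (a b : Series X) (n : ℕ),
    (∀ w : List X, w.length < n → b w = 0) → η.length < n → sh a b η = 0 := by
  intro η
  induction η with
  | nil => intro a b n hb hη; rw [sh_nil, hb [] (by simpa using hη)]; ring
  | cons x t ih =>
      intro a b n hb hη
      rw [sh_cons]
      simp only [List.length_cons] at hη
      rw [ih (fun w => a (x::w)) b n hb (by omega)]
      rw [ih a (fun w => b (x::w)) (n-1)
            (fun w hw => hb (x::w) (by simp only [List.length_cons]; omega))
            (by omega)]
      ring

end Aux
section Aux2

theorem phiWord_zero {m : ℕ} (e : Fin m → Series (Fin (m+1))) (t : List (Fin (m+1)))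
    (w : Series (Fin (m+1))) :
    phiWord e ((0 : Fin (m+1)) :: t) w = leftc 0 (phiWord e t w) := by
  simp [phiWord]

theorem phiWord_succ {m : ℕ} (e : Fin m → Series (Fin (m+1))) (j : Fin m)
    (t : List (Fin (m+1))) (w : Series (Fin (m+1))) :
    phiWord e (j.succ :: t) w = leftc j.succ (sh (e j) (phiWord e t w)) := by
  simp [phiWord]

theorem phi_vanish {m : ℕ} (e : Fin m → Series (Fin (m+1))) :
    ∀ (u η : List (Fin (m+1))), η.length < u.length → phiWord e u one η = 0 := by
  intro u
  induction u with
  | nil => intro η h; simp at h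
  | cons i t ih =>
      intro η h
      rcases Fin.eq_zero_or_eq_succ i with rfl | ⟨j, rfl⟩
      · rw [phiWord_zero]
        cases η with
        | nil => rfl
        | cons y t2 =>
            show (if y = 0 then phiWord e t one t2 else 0) = 0
            split
            · exact ih t2 (by simp only [List.length_cons] at h; omega)
            · rfl
      · rw [phiWord_succ]
        cases η with
        | nil => rfl
        | cons y t2 =>
            show (if y = j.succ then sh (e j) (phiWord e t one) t2 else 0) = 0
            split
            · exact sh_vanish t2 _ _ t.length (fun w hw => ih w hw)
                (by simp only [List.length_cons] at h; omega)
            · rfl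

instance {α : Type*} : Unique (List.Vector α 0) :=
  ⟨⟨List.Vector.nil⟩, fun v => v.eq_nil⟩

theorem mix_nil {m : ℕ} (c : Series (Fin (m+1))) (e : Fin m → Series (Fin (m+1))) :
    mix c e ([] : List (Fin (m+1))) = c [] := by
  unfold mix
  simp only [List.length_nil, Nat.zero_add, Finset.sum_range_one]
  rw [Fintype.sum_unique]
  show c (List.Vector.nil).toList * phiWord e (List.Vector.nil).toList one [] = c []
  rw [List.Vector.toList_nil]
  show c [] * one [] = c []
  simp [one]

theorem mix_trunc {m : ℕ} (c : Series (Fin (m+1))) (e : Fin m → Series (Fin (m+1)))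
    (η : List (Fin (m+1))) (M : ℕ) (h : η.length ≤ M) :
    mix c e η = ∑ k ∈ Finset.range (M+1), ∑ v : List.Vector (Fin (m+1)) k,
      c v.toList * phiWord e v.toList one η := by
  unfold mix
  apply Finset.sum_subset
  · intro k hk; simp only [Finset.mem_range] at hk ⊢; omega
  · intro k hk hk'
    apply Finset.sum_eq_zero
    intro v _
    rw [phi_vanish e v.toList η
      (by simp only [Finset.mem_range] at hk'; rw [List.Vector.toList_length]; omega)]
    ring

theorem mix_add {m : ℕ} (c c' : Series (Fin (m+1))) (e : Fin m → Series (Fin (m+1)))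
    (η : List (Fin (m+1))) :
    mix (fun w => c w + c' w) e η = mix c e η + mix c' e η := by
  unfold mix
  rw [← Finset.sum_add_distrib]
  refine Finset.sum_congr rfl fun k _ => ?_
  rw [← Finset.sum_add_distrib]
  exact Finset.sum_congr rfl fun v _ => by ring

theorem vec_sum_succ {α : Type*} [Fintype α] [DecidableEq α] {k : ℕ}
    (f : List.Vector α (k+1) → ℝ) :
    ∑ v : List.Vector α (k+1), f v
      = ∑ i : α, ∑ v : List.Vector α k, f (List.Vector.cons i v) := by
  have h1 : (∑ v : List.Vector α (k+1), f v)
      = ∑ p : α × List.Vector α k, f (List.Vector.cons p.1 p.2) :=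
    Fintype.sum_equiv
      ⟨fun v => (v.head, v.tail), fun p => List.Vector.cons p.1 p.2,
        fun v => List.Vector.cons_head_tail v,
        fun p => by simp [List.Vector.head_cons, List.Vector.tail_cons]⟩ _ _
      fun v => by
        show f v = f (List.Vector.cons v.head v.tail)
        rw [List.Vector.cons_head_tail]
  rw [h1, Fintype.sum_prod_type]

end Aux2
section Aux3

theorem leftc_cons {X : Type*} [DecidableEq X] (x y : X) (s : Series X) (t : List X) :
    leftc x s (y :: t) = if y = x then s t else 0 := rfl

theorem sum_vec_zero {m : ℕ} (c : Series (Fin (m+1))) (e : Fin m → Series (Fin (m+1)))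
    (η : List (Fin (m+1))) (hη : η ≠ []) :
    (∑ v : List.Vector (Fin (m+1)) 0,
        c v.toList * phiWord e v.toList one η) = 0 := by
  rw [Fintype.sum_unique]
  show c (List.Vector.nil).toList * phiWord e (List.Vector.nil).toList one η = 0
  rw [List.Vector.toList_nil]
  show c [] * one η = 0
  simp [one, hη]

theorem mix_cons_zero {m : ℕ} (c : Series (Fin (m+1))) (e : Fin m → Series (Fin (m+1)))
    (t : List (Fin (m+1))) :
    mix c e ((0 : Fin (m+1)) :: t) = mix (fun w => c ((0 : Fin (m+1)) :: w)) e t := by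
  unfold mix
  simp only [List.length_cons]
  rw [Finset.sum_range_succ']
  rw [sum_vec_zero c e _ (by simp), add_zero]
  refine Finset.sum_congr rfl fun k _ => ?_
  rw [vec_sum_succ, Fin.sum_univ_succ]
  have hz : ∀ j : Fin m,
      (∑ v : List.Vector (Fin (m+1)) k,
        c (List.Vector.cons (Fin.succ j) v).toList *
          phiWord e (List.Vector.cons (Fin.succ j) v).toList one
            ((0 : Fin (m+1)) :: t)) = 0 := by
    intro j
    apply Finset.sum_eq_zero
    intro v _
    rw [List.Vector.toList_cons, phiWord_succ, leftc_cons,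
        if_neg (Ne.symm (Fin.succ_ne_zero j))]
    ring
  simp only [hz, Finset.sum_const_zero, add_zero]
  refine Finset.sum_congr rfl fun v _ => ?_
  rw [List.Vector.toList_cons, phiWord_zero, leftc_cons, if_pos rfl]

theorem mix_cons_succ {m : ℕ} (c : Series (Fin (m+1))) (e : Fin m → Series (Fin (m+1)))
    (j : Fin m) (t : List (Fin (m+1))) :
    mix c e (j.succ :: t) = sh (e j) (mix (fun w => c (j.succ :: w)) e) t := by
  have lhs : mix c e (j.succ :: t)
      = ∑ k ∈ Finset.range (t.length + 1), ∑ v : List.Vector (Fin (m+1)) k,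
          c (j.succ :: v.toList) * sh (e j) (phiWord e v.toList one) t := by
    unfold mix
    simp only [List.length_cons]
    rw [Finset.sum_range_succ']
    rw [sum_vec_zero c e _ (by simp), add_zero]
    refine Finset.sum_congr rfl fun k _ => ?_
    rw [vec_sum_succ, Fin.sum_univ_succ]
    have h0 : (∑ v : List.Vector (Fin (m+1)) k,
        c (List.Vector.cons (0 : Fin (m+1)) v).toList *
          phiWord e (List.Vector.cons (0 : Fin (m+1)) v).toList one
            (j.succ :: t)) = 0 := by
      apply Finset.sum_eq_zero
      intro v _
      rw [List.Vector.toList_cons, phiWord_zero, leftc_cons,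
          if_neg (Fin.succ_ne_zero j)]
      ring
    rw [h0, zero_add]
    rw [Finset.sum_eq_single_of_mem j (Finset.mem_univ j)
      (fun j' _ hne => by
        apply Finset.sum_eq_zero
        intro v _
        rw [List.Vector.toList_cons, phiWord_succ, leftc_cons,
            if_neg (fun h => hne (Fin.succ_inj.mp h.symm))]
        ring)]
    refine Finset.sum_congr rfl fun v _ => ?_
    rw [List.Vector.toList_cons, phiWord_succ, leftc_cons, if_pos rfl]
  rw [lhs]
  have h2 : ∀ k : ℕ,
      (∑ v : List.Vector (Fin (m+1)) k,
        c (j.succ :: v.toList) * sh (e j) (phiWord e v.toList one) t)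
      = sh (e j) (fun η' => ∑ v : List.Vector (Fin (m+1)) k,
          c (j.succ :: v.toList) * phiWord e v.toList one η') t := by
    intro k
    refine Eq.trans ?_ (sh_sum_right t (e j) Finset.univ
      (fun (v : List.Vector (Fin (m+1)) k) η' =>
        c (j.succ :: v.toList) * phiWord e v.toList one η')).symm
    exact Finset.sum_congr rfl fun v _ =>
      (sh_smul_right t (e j) (phiWord e v.toList one) (c (j.succ :: v.toList))).symm
  simp only [h2]
  refine Eq.trans (sh_sum_right t (e j) (Finset.range (t.length + 1))
      (fun k η' => ∑ v : List.Vector (Fin (m+1)) k,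
        c (j.succ :: v.toList) * phiWord e v.toList one η')).symm ?_
  apply sh_congr t _ _ _ _ (fun w _ => rfl)
  intro w hw
  exact (mix_trunc (fun w => c (j.succ :: w)) e w t.length hw).symm

end Aux3
section Aux4

theorem sh_swap {X : Type*} [DecidableEq X] (η : List X) (a b c : Series X) :
    sh a (sh b c) η = sh b (sh a c) η := by
  rw [← sh_assoc η a b c]
  have h : sh a b = sh b a := funext fun w => sh_comm w a b
  rw [h, sh_assoc]

theorem mix_key {m : ℕ} (e : Fin m → Series (Fin (m+1))) :
    ∀ (n : ℕ) (η : List (Fin (m+1))), η.length ≤ n → ∀ c d : Series (Fin (m+1)),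
      mix (sh c d) e η = sh (mix c e) (mix d e) η := by
  intro n
  induction n with
  | zero =>
      intro η hη c d
      have hnil : η = [] := List.eq_nil_of_length_eq_zero (Nat.le_zero.mp hη)
      subst hnil
      rw [mix_nil, sh_nil, sh_nil, mix_nil, mix_nil]
  | succ n ih =>
      intro η hη c d
      cases η with
      | nil => rw [mix_nil, sh_nil, sh_nil, mix_nil, mix_nil]
      | cons x t =>
          have ht : t.length ≤ n := by simp only [List.length_cons] at hη; omega
          rcases Fin.eq_zero_or_eq_succ x with rfl | ⟨j, rfl⟩
          · -- head letter x₀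
            rw [mix_cons_zero]
            have hsp : (fun w => sh c d ((0 : Fin (m+1)) :: w))
                = fun w => sh (fun w' => c ((0 : Fin (m+1)) :: w')) d w
                    + sh c (fun w' => d ((0 : Fin (m+1)) :: w')) w :=
              funext fun w => sh_cons c d 0 w
            rw [hsp, mix_add, ih t ht, ih t ht]
            rw [sh_cons (mix c e) (mix d e) 0 t]
            have h1 : (fun w => mix c e ((0 : Fin (m+1)) :: w))
                = mix (fun w' => c ((0 : Fin (m+1)) :: w')) e :=
              funext fun w => mix_cons_zero c e w
            have h2 : (fun w => mix d e ((0 : Fin (m+1)) :: w))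
                = mix (fun w' => d ((0 : Fin (m+1)) :: w')) e :=
              funext fun w => mix_cons_zero d e w
            rw [h1, h2]
          · -- head letter x_{j+1}
            rw [mix_cons_succ]
            have hsp : (fun w => sh c d (j.succ :: w))
                = fun w => sh (fun w' => c (j.succ :: w')) d w
                    + sh c (fun w' => d (j.succ :: w')) w :=
              funext fun w => sh_cons c d j.succ w
            rw [hsp]
            have hadd : mix (fun w => sh (fun w' => c (j.succ :: w')) d w
                    + sh c (fun w' => d (j.succ :: w')) w) e
                = fun η' => mix (sh (fun w' => c (j.succ :: w')) d) e η'
                    + mix (sh c (fun w' => d (j.succ :: w'))) e η' :=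
              funext fun η' => mix_add _ _ e η'
            rw [hadd]
            have hcongr : sh (e j)
                (fun η' => mix (sh (fun w' => c (j.succ :: w')) d) e η'
                    + mix (sh c (fun w' => d (j.succ :: w'))) e η') t
                = sh (e j)
                (fun η' => sh (mix (fun w' => c (j.succ :: w')) e) (mix d e) η'
                    + sh (mix c e) (mix (fun w' => d (j.succ :: w')) e) η') t := by
              apply sh_congr t _ _ _ _ (fun w _ => rfl)
              intro w hw
              rw [ih w (le_trans hw ht), ih w (le_trans hw ht)]
            rw [hcongr]
            rw [sh_add_right t (e j)
              (sh (mix (fun w' => c (j.succ :: w')) e) (mix d e))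
              (sh (mix c e) (mix (fun w' => d (j.succ :: w')) e))]
            rw [← sh_assoc t (e j) (mix (fun w' => c (j.succ :: w')) e) (mix d e)]
            rw [sh_swap t (e j) (mix c e) (mix (fun w' => d (j.succ :: w')) e)]
            rw [sh_cons (mix c e) (mix d e) j.succ t]
            have h1 : (fun w => mix c e (j.succ :: w))
                = sh (e j) (mix (fun w' => c (j.succ :: w')) e) :=
              funext fun w => mix_cons_succ c e j w
            have h2 : (fun w => mix d e (j.succ :: w))
                = sh (e j) (mix (fun w' => d (j.succ :: w')) e) :=
              funext fun w => mix_cons_succ d e j w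
            rw [h1, h2]

end Aux4

/-- The shuffle product distributes over the multiplicative mixed
composition product from the left: `(c ⧢ d) ∘̄ δ_e = (c ∘̄ δ_e) ⧢ (d ∘̄ δ_e)`. -/
theorem shuffle_distributes_over_mix (m : ℕ)
    (c d : Series (Fin (m + 1))) (e : Fin m → Series (Fin (m + 1))) :
    mix (sh c d) e = sh (mix c e) (mix d e) := by
  funext η
  exact mix_key e η.length η le_rfl c d

end FPS
end

section
/- For series d, e ∈ ℝ^m⟨⟨X⟩⟩ and c ∈ ℝ^p⟨⟨X⟩⟩ with proper part c' = c − (c,∅)∅, the map e ↦ c ∘̄ δ_e satisfies κ(c ∘̄ δ_d, c ∘̄ δ_e) ≤ σ^{ord(c')} κ(d,e); in particular, since ord(c') ≥ 1 and σ ∈ (0,1), this map is a strong contraction on the complete ultrametric space. -/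
open scoped BigOperators

namespace FPS

section Aux

variable {X : Type*} [DecidableEq X]

lemma sh_eq_zero : ∀ (η : List X) (a b : Series X),
    (∀ u : List X, u.length ≤ η.length → b u = 0) → sh a b η = 0
  | [], a, b, h => by simp [sh, h [] (le_refl 0)]
  | x :: t, a, b, h => by
    simp only [sh]
    rw [sh_eq_zero t _ b (fun u hu => h u (by simp; omega)),
        sh_eq_zero t a _ (fun u hu => h (x :: u) (by simp; omega))]
    ring

lemma sh_congr_s9 : ∀ (η : List X) (a₁ a₂ b₁ b₂ : Series X) (N M M0 : ℕ),
    (∀ u : List X, u.length < N → a₁ u = a₂ u) →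
    (∀ u : List X, u.length < M → b₁ u = b₂ u) →
    (∀ u : List X, u.length < M0 → b₁ u = 0 ∧ b₂ u = 0) →
    η.length < M → η.length < N + M0 →
    sh a₁ b₁ η = sh a₂ b₂ η
  | [], a₁, a₂, b₁, b₂, N, M, M0, ha, hb, hb0, hM, hNM0 => by
    simp only [sh]
    rcases Nat.eq_zero_or_pos M0 with h0 | h0
    · rw [ha [] (by simp; omega), hb [] (by simpa using hM)]
    · rw [(hb0 [] (by simpa using h0)).1, (hb0 [] (by simpa using h0)).2, mul_zero, mul_zero]
  | x :: t, a₁, a₂, b₁, b₂, N, M, M0, ha, hb, hb0, hM, hNM0 => by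
    simp only [sh]
    have h1 : sh (fun w => a₁ (x :: w)) b₁ t = sh (fun w => a₂ (x :: w)) b₂ t := by
      refine sh_congr_s9 t _ _ _ _ (N - 1) M M0 (fun u hu => ha (x :: u) (by simp; omega))
        hb hb0 (by simp at hM ⊢; omega) (by simp at hNM0 ⊢; omega)
    have h2 : sh a₁ (fun w => b₁ (x :: w)) t = sh a₂ (fun w => b₂ (x :: w)) t := by
      refine sh_congr_s9 t _ _ _ _ N (M - 1) (M0 - 1) ha
        (fun u hu => hb (x :: u) (by simp; omega))
        (fun u hu => hb0 (x :: u) (by simp; omega))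
        (by simp at hM ⊢; omega) (by simp at hNM0 ⊢; omega)
    rw [h1, h2]

lemma ord_le_of_ne {c : Series X} {η : List X} (h : c η ≠ 0) : ord c ≤ (η.length : ℕ∞) :=
  sInf_le ⟨η, h, rfl⟩

lemma apply_eq_zero_of_lt_ord {c : Series X} {η : List X}
    (h : (η.length : ℕ∞) < ord c) : c η = 0 := by
  by_contra hc
  exact absurd (ord_le_of_ne hc) (not_le_of_gt h)

lemma powE_nonneg {σ : ℝ} (hσ : 0 ≤ σ) (n : ℕ∞) : 0 ≤ powE σ n := by
  unfold powE; split <;> positivity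

lemma powE_mono {σ : ℝ} (h0 : 0 ≤ σ) (h1 : σ ≤ 1) {a b : ℕ∞} (hab : a ≤ b) :
    powE σ b ≤ powE σ a := by
  induction a using ENat.recTopCoe with
  | top =>
    have : b = ⊤ := top_le_iff.mp hab
    simp [this]
  | coe a =>
    induction b using ENat.recTopCoe with
    | top =>
      simp only [powE, if_pos rfl, if_neg (by simp : ((a : ℕ∞)) ≠ ⊤)]
      positivity
    | coe b =>
      have hab' : a ≤ b := by exact_mod_cast hab
      simp only [powE, if_neg (by simp : ((a : ℕ∞)) ≠ ⊤), if_neg (by simp : ((b : ℕ∞)) ≠ ⊤)]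
      simpa using pow_le_pow_of_le_one h0 h1 hab'

lemma powE_add (σ : ℝ) (a b : ℕ∞) : powE σ (a + b) = powE σ a * powE σ b := by
  induction a using ENat.recTopCoe with
  | top => simp [powE]
  | coe a =>
    induction b using ENat.recTopCoe with
    | top => simp [powE]
    | coe b =>
      have hne : ((a : ℕ∞) + b) ≠ ⊤ := by
        have h : ((a : ℕ∞) + b) = ((a + b : ℕ) : ℕ∞) := by push_cast; ring
        rw [h]; exact ENat.coe_ne_top _
      have ht : ((a : ℕ∞) + b).toNat = a + b := by
        rw [ENat.toNat_add (by simp) (by simp)]; simp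
      simp only [powE, if_neg hne, if_neg (by simp : ((a : ℕ∞)) ≠ ⊤),
        if_neg (by simp : ((b : ℕ∞)) ≠ ⊤), ht, pow_add]
      simp

end Aux

section AuxPhi

variable {m : ℕ}

lemma phiWord_eq_zero (d : Fin m → Series (Fin (m + 1))) :
    ∀ (v : List (Fin (m + 1))) (w : Series (Fin (m + 1))) (η : List (Fin (m + 1))),
      η.length < v.length → phiWord d v w η = 0
  | [], w, η, h => by simp at h
  | i :: t, w, η, h => by
    induction i using Fin.cases with
    | zero =>
      simp only [phiWord, Fin.cases_zero]
      rcases η with _ | ⟨y, t'⟩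
      · simp [leftc]
      · simp only [leftc]
        split
        · exact phiWord_eq_zero d t w t' (by simp at h; omega)
        · rfl
    | succ j =>
      simp only [phiWord, Fin.cases_succ]
      rcases η with _ | ⟨y, t'⟩
      · simp [leftc]
      · simp only [leftc]
        split
        · exact sh_eq_zero t' _ _ (fun u hu =>
            phiWord_eq_zero d t w u (by simp at h; omega))
        · rfl

lemma phiWord_congr (d e : Fin m → Series (Fin (m + 1))) (N : ℕ)
    (hde : ∀ (j : Fin m) (u : List (Fin (m + 1))), u.length < N → d j u = e j u) :
    ∀ (v : List (Fin (m + 1))) (η : List (Fin (m + 1))),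
      η.length < v.length + N → phiWord d v one η = phiWord e v one η
  | [], η, h => rfl
  | i :: t, η, h => by
    induction i using Fin.cases with
    | zero =>
      simp only [phiWord, Fin.cases_zero]
      rcases η with _ | ⟨y, t'⟩
      · rfl
      · simp only [leftc]
        split
        · exact phiWord_congr d e N hde t t' (by simp at h; omega)
        · rfl
    | succ j =>
      simp only [phiWord, Fin.cases_succ]
      rcases η with _ | ⟨y, t'⟩
      · rfl
      · simp only [leftc]
        split
        · refine sh_congr_s9 t' (d j) (e j) _ _ N (t.length + N) t.length
            (fun u hu => hde j u hu)
            (fun u hu => phiWord_congr d e N hde t u hu)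
            (fun u hu => ⟨phiWord_eq_zero d t one u hu, phiWord_eq_zero e t one u hu⟩)
            (by simp at h; omega) (by simp at h; omega)
        · rfl

end AuxPhi

/-- `κ(c ∘̄ δ_d, c ∘̄ δ_e) ≤ σ^{ord(c')} κ(d, e)` where `c'` is the proper
part of `c`; in particular `e ↦ c ∘̄ δ_e` is a strong contraction. -/
theorem mix_strong_contraction (p m : ℕ) (σ : ℝ) (hσ0 : 0 < σ) (hσ1 : σ < 1)
    (c : Fin p → Series (Fin (m + 1))) (d e : Fin m → Series (Fin (m + 1))) :
    kappaV σ (fun i => mix (c i) d) (fun i => mix (c i) e) ≤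
      powE σ (ordV fun i => properPart (c i)) * kappaV σ d e ∧
    kappaV σ (fun i => mix (c i) d) (fun i => mix (c i) e) ≤ σ * kappaV σ d e := by
  set A := ordV (fun i => properPart (c i)) with hAdef
  set N := ordV (d - e) with hNdef
  -- the key order estimate
  have key : A + N ≤ ordV ((fun i => mix (c i) d) - (fun i => mix (c i) e)) := by
    refine le_iInf fun i => le_sInf ?_
    rintro b ⟨η, hη, rfl⟩
    by_contra hlt
    push_neg at hlt
    apply hη
    have hmix : mix (c i) d η = mix (c i) e η := by
      unfold mix
      refine Finset.sum_congr rfl fun k hk => Finset.sum_congr rfl fun v _ => ?_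
      by_cases hc : c i v.toList = 0
      · rw [hc, zero_mul, zero_mul]
      by_cases hv : v.toList = []
      · rw [hv]; rfl
      congr 1
      -- `v.toList` is in the support of the proper part of `c i`
      have hcp : properPart (c i) v.toList ≠ 0 := by
        simpa [properPart, if_neg hv] using hc
      have hAv : A ≤ (v.toList.length : ℕ∞) :=
        le_trans (iInf_le _ i) (ord_le_of_ne hcp)
      have hηv : (η.length : ℕ∞) < (v.toList.length : ℕ∞) + N :=
        lt_of_lt_of_le hlt (add_le_add_left hAv N)
      have hNord : ∀ j : Fin m, N ≤ ord ((d - e) j) := fun j => iInf_le _ j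
      cases hNcase : N using ENat.recTopCoe with
      | top =>
        have hde : ∀ (j : Fin m) (u : List (Fin (m + 1))),
            u.length < η.length + 1 → d j u = e j u := by
          intro j u _
          have hN : (⊤ : ℕ∞) ≤ ord ((d - e) j) := hNcase ▸ hNord j
          have h2 : (d - e) j u = 0 := apply_eq_zero_of_lt_ord
            (lt_of_lt_of_le (lt_top_iff_ne_top.mpr (by simp)) hN)
          have h3 : d j u - e j u = 0 := h2
          linarith [h3]
        exact phiWord_congr d e (η.length + 1) hde v.toList η (by omega)
      | coe n =>
        have hde : ∀ (j : Fin m) (u : List (Fin (m + 1))),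
            u.length < n → d j u = e j u := by
          intro j u hu
          have hN : ((n : ℕ∞)) ≤ ord ((d - e) j) := hNcase ▸ hNord j
          have h2 : (d - e) j u = 0 := apply_eq_zero_of_lt_ord
            (lt_of_lt_of_le (by exact_mod_cast hu) hN)
          have h3 : d j u - e j u = 0 := h2
          linarith [h3]
        have hlen : η.length < v.toList.length + n := by
          rw [hNcase] at hηv
          exact_mod_cast hηv
        exact phiWord_congr d e n hde v.toList η hlen
    show ((fun i => mix (c i) d) - (fun i => mix (c i) e)) i η = 0
    simpa using sub_eq_zero.mpr hmix
  have h1 : kappaV σ (fun i => mix (c i) d) (fun i => mix (c i) e) ≤ powE σ A * powE σ N := by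
    rw [← powE_add]
    exact powE_mono hσ0.le hσ1.le key
  have hkdN : kappaV σ d e = powE σ N := rfl
  refine ⟨by rw [hkdN]; exact h1, ?_⟩
  have hA1 : (1 : ℕ∞) ≤ A := by
    refine le_iInf fun i => le_sInf ?_
    rintro b ⟨η, hη, rfl⟩
    rcases η with _ | ⟨y, t⟩
    · simp [properPart] at hη
    · simp only [List.length_cons]
      exact_mod_cast Nat.succ_le_succ (Nat.zero_le _)
  have hpa : powE σ A ≤ σ := by
    have := powE_mono hσ0.le hσ1.le hA1
    calc powE σ A ≤ powE σ 1 := this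
      _ = σ := by
        have h1t : (1 : ℕ∞) = ((1 : ℕ) : ℕ∞) := rfl
        rw [h1t]
        simp [powE]
  rw [hkdN]
  calc kappaV σ (fun i => mix (c i) d) (fun i => mix (c i) e) ≤ powE σ A * powE σ N := h1
    _ ≤ σ * powE σ N := mul_le_mul_of_nonneg_right hpa (powE_nonneg hσ0.le N)

end FPS
end
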